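/- Assume that every diagonal entry of B is nonzero and every row of B̃ is nonzero. Let D be the diagonal part of B and R = B − D. Let sequences x₁^(k) ∈ ℝ^m and x₂^(k) ∈ ℝ^p satisfy, for all k ≥ 0: x₂^(k+1) = x₂^(k) + s(B̃)·d^(k) with d^(k)_i = (b_i − B_i·x₁^(k) − B̃_i·x₂^(k))/(m·‖B̃_i‖₁), and x₁^(k+1) = D⁻¹·(−R·x₁^(k) + b − B̃·x₂^(k+1)). Set q = ‖I − B·D⁻¹‖₁ · ‖I − (1/m)·B̃·s(B̃)·N(B̃)⁻¹‖₁, where ‖·‖₁ is the ℓ1 operator norm. If q < 1, then for every k, ‖B·x₁^(k) + B̃·x₂^(k) − b‖₁ ≤ q^k · ‖B·x₁^(0) + B̃·x₂^(0) − b‖₁; in particular the residuals B·x₁^(k) + B̃·x₂^(k) − b converge to the zero vector as k → ∞. -/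
import Mathlib


/-- The ℓ1-norm of a vector: sum of absolute values of its entries. -/
noncomputable def vecL1 {n : ℕ} (v : Fin n → ℝ) : ℝ := ∑ i, |v i|

/-- The ℓ1 operator norm of a matrix: the maximum absolute column sum. -/
noncomputable def matL1 {a c : ℕ} (M : Matrix (Fin a) (Fin c) ℝ) : ℝ :=
  ⨆ j, ∑ i, |M i j|

lemma vecL1_nonneg {n : ℕ} (v : Fin n → ℝ) : 0 ≤ vecL1 v :=
  Finset.sum_nonneg fun _ _ => abs_nonneg _

lemma col_le_matL1 {a c : ℕ} (M : Matrix (Fin a) (Fin c) ℝ) (j : Fin c) :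
    ∑ i, |M i j| ≤ matL1 M :=
  le_ciSup (f := fun j => ∑ i, |M i j|) (Set.Finite.bddAbove (Set.finite_range _)) j

lemma matL1_nonneg {a c : ℕ} (hc : 0 < c) (M : Matrix (Fin a) (Fin c) ℝ) :
    0 ≤ matL1 M :=
  le_trans (Finset.sum_nonneg fun _ _ => abs_nonneg _) (col_le_matL1 M ⟨0, hc⟩)

lemma vecL1_mulVec_le {a c : ℕ} (M : Matrix (Fin a) (Fin c) ℝ) (v : Fin c → ℝ) :
    vecL1 (M.mulVec v) ≤ matL1 M * vecL1 v := by
  have h1 : vecL1 (M.mulVec v) ≤ ∑ j, (∑ i, |M i j|) * |v j| := by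
    unfold vecL1
    calc ∑ i, |M.mulVec v i| ≤ ∑ i, ∑ j, |M i j * v j| := by
          apply Finset.sum_le_sum
          intro i _
          exact Finset.abs_sum_le_sum_abs (fun j => M i j * v j) Finset.univ
      _ = ∑ j, (∑ i, |M i j|) * |v j| := by
          rw [Finset.sum_comm]
          apply Finset.sum_congr rfl
          intro j _
          rw [Finset.sum_mul]
          exact Finset.sum_congr rfl fun i _ => abs_mul _ _
  calc vecL1 (M.mulVec v) ≤ ∑ j, (∑ i, |M i j|) * |v j| := h1
    _ ≤ ∑ j, matL1 M * |v j| := by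
        apply Finset.sum_le_sum
        intro j _
        exact mul_le_mul_of_nonneg_right (col_le_matL1 M j) (abs_nonneg _)
    _ = matL1 M * vecL1 v := by rw [vecL1, Finset.mul_sum]

/-- if `q = ‖I − B D⁻¹‖₁ ‖I − (1/m) B̃ s N⁻¹‖₁ < 1`, then the residuals
of the generalized Jacobi iteration satisfy `‖res k‖₁ ≤ q^k ‖res 0‖₁`, and in
particular they converge to the zero vector. -/
theorem generalized_jacobi_residual_convergence
    (m p : ℕ) (hm : 0 < m) (hp : 0 < p)
    (B : Matrix (Fin m) (Fin m) ℝ) (Bt : Matrix (Fin m) (Fin p) ℝ) (b : Fin m → ℝ)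
    (hDiag : ∀ i, B i i ≠ 0) (hRows : ∀ i, Bt i ≠ 0)
    (s : Matrix (Fin p) (Fin m) ℝ) (hs : ∀ j i, s j i = Real.sign (Bt i j))
    (N : Matrix (Fin m) (Fin m) ℝ)
    (hN : N = Matrix.diagonal (fun i => ∑ j, |Bt i j|))
    (D : Matrix (Fin m) (Fin m) ℝ) (hD : D = Matrix.diagonal (fun i => B i i))
    (R : Matrix (Fin m) (Fin m) ℝ) (hR : R = B - D)
    (x₁ : ℕ → Fin m → ℝ) (x₂ : ℕ → Fin p → ℝ)
    (d : ℕ → Fin m → ℝ)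
    (hd : ∀ k i, d k i = (b i - (B.mulVec (x₁ k)) i - (Bt.mulVec (x₂ k)) i) /
      ((m : ℝ) * ∑ j, |Bt i j|))
    (hx₂ : ∀ k, x₂ (k + 1) = x₂ k + s.mulVec (d k))
    (hx₁ : ∀ k, x₁ (k + 1) = D⁻¹.mulVec (-(R.mulVec (x₁ k)) + (b - Bt.mulVec (x₂ (k + 1)))))
    (q : ℝ)
    (hq : q = matL1 (1 - B * D⁻¹) * matL1 (1 - (1 / (m : ℝ)) • (Bt * s * N⁻¹)))
    (hq1 : q < 1) :
    (∀ k, vecL1 (B.mulVec (x₁ k) + Bt.mulVec (x₂ k) - b) ≤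
        q ^ k * vecL1 (B.mulVec (x₁ 0) + Bt.mulVec (x₂ 0) - b)) ∧
    Filter.Tendsto (fun k => B.mulVec (x₁ k) + Bt.mulVec (x₂ k) - b)
      Filter.atTop (nhds 0) := by
  set r : ℕ → Fin m → ℝ := fun k => B.mulVec (x₁ k) + Bt.mulVec (x₂ k) - b with hr
  have hmne : (m : ℝ) ≠ 0 := Nat.cast_ne_zero.mpr hm.ne'
  have hn : ∀ i, (∑ j, |Bt i j|) ≠ 0 := by
    intro i
    have : ∃ j, Bt i j ≠ 0 := by
      by_contra h
      push_neg at h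
      exact hRows i (funext h)
    obtain ⟨j, hj⟩ := this
    have : 0 < ∑ j, |Bt i j| :=
      Finset.sum_pos' (fun _ _ => abs_nonneg _) ⟨j, Finset.mem_univ j, abs_pos.mpr hj⟩
    exact this.ne'
  have hNinv : N⁻¹ = Matrix.diagonal (fun i => (∑ j, |Bt i j|)⁻¹) := by
    apply Matrix.inv_eq_right_inv
    rw [hN, Matrix.diagonal_mul_diagonal, ← Matrix.diagonal_one]
    exact congrArg Matrix.diagonal (funext fun i => mul_inv_cancel₀ (hn i))
  have hDinv : D⁻¹ = Matrix.diagonal (fun i => (B i i)⁻¹) := by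
    apply Matrix.inv_eq_right_inv
    rw [hD, Matrix.diagonal_mul_diagonal, ← Matrix.diagonal_one]
    exact congrArg Matrix.diagonal (funext fun i => mul_inv_cancel₀ (hDiag i))
  have hDDinv : ∀ v : Fin m → ℝ, D⁻¹.mulVec (D.mulVec v) = v := by
    intro v
    funext i
    rw [hDinv, Matrix.mulVec_diagonal, hD, Matrix.mulVec_diagonal]
    exact inv_mul_cancel_left₀ (hDiag i) (v i)
  have hd' : ∀ k, d k = N⁻¹.mulVec ((-(1 / (m : ℝ))) • (r k)) := by
    intro k
    funext i
    rw [hNinv, Matrix.mulVec_diagonal, hd]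
    have : r k i = (B.mulVec (x₁ k)) i + (Bt.mulVec (x₂ k)) i - b i := rfl
    rw [Pi.smul_apply, this, smul_eq_mul]
    field_simp
    ring
  have hstep : ∀ k, r (k + 1) =
      ((1 - B * D⁻¹) * (1 - (1 / (m : ℝ)) • (Bt * s * N⁻¹))).mulVec (r k) := by
    intro k
    have h2 : B.mulVec (x₁ k) + Bt.mulVec (x₂ (k + 1)) - b =
        (1 - (1 / (m : ℝ)) • (Bt * s * N⁻¹)).mulVec (r k) := by
      rw [hx₂ k, Matrix.mulVec_add, Matrix.mulVec_mulVec, hd' k, Matrix.mulVec_mulVec,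
        Matrix.mulVec_smul, Matrix.sub_mulVec, Matrix.one_mulVec,
        Matrix.smul_mulVec]
      funext i
      simp only [Pi.add_apply, Pi.sub_apply, Pi.smul_apply, smul_eq_mul, hr]
      ring
    have h3 : r (k + 1) = (1 - B * D⁻¹).mulVec
        (B.mulVec (x₁ k) + Bt.mulVec (x₂ (k + 1)) - b) := by
      have key : -(R.mulVec (x₁ k)) + (b - Bt.mulVec (x₂ (k + 1))) =
          D.mulVec (x₁ k) - (B.mulVec (x₁ k) + Bt.mulVec (x₂ (k + 1)) - b) := by
        rw [hR, Matrix.sub_mulVec]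
        funext i
        simp only [Pi.add_apply, Pi.sub_apply, Pi.neg_apply]
        ring
      show B.mulVec (x₁ (k + 1)) + Bt.mulVec (x₂ (k + 1)) - b = _
      rw [hx₁ k, key, Matrix.mulVec_sub, hDDinv, Matrix.mulVec_sub, Matrix.sub_mulVec,
        Matrix.one_mulVec, ← Matrix.mulVec_mulVec]
      funext i
      simp only [Pi.add_apply, Pi.sub_apply]
      ring
    rw [← Matrix.mulVec_mulVec, ← h2, ← h3]
  have hqnn : 0 ≤ q := hq ▸ mul_nonneg (matL1_nonneg hm _) (matL1_nonneg hm _)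
  have hbound : ∀ k, vecL1 (r k) ≤ q ^ k * vecL1 (r 0) := by
    intro k
    induction k with
    | zero => simp
    | succ k ih =>
      calc vecL1 (r (k + 1))
          = vecL1 ((1 - B * D⁻¹).mulVec
              ((1 - (1 / (m : ℝ)) • (Bt * s * N⁻¹)).mulVec (r k))) := by
            rw [hstep k, ← Matrix.mulVec_mulVec]
        _ ≤ matL1 (1 - B * D⁻¹) *
              vecL1 ((1 - (1 / (m : ℝ)) • (Bt * s * N⁻¹)).mulVec (r k)) :=
            vecL1_mulVec_le _ _
        _ ≤ matL1 (1 - B * D⁻¹) *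
              (matL1 (1 - (1 / (m : ℝ)) • (Bt * s * N⁻¹)) * vecL1 (r k)) := by
            apply mul_le_mul_of_nonneg_left (vecL1_mulVec_le _ _) (matL1_nonneg hm _)
        _ = q * vecL1 (r k) := by rw [hq]; ring
        _ ≤ q * (q ^ k * vecL1 (r 0)) := mul_le_mul_of_nonneg_left ih hqnn
        _ = q ^ (k + 1) * vecL1 (r 0) := by ring
  refine ⟨hbound, ?_⟩
  have hL1tendsto : Filter.Tendsto (fun k => vecL1 (r k)) Filter.atTop (nhds 0) := by
    have hgeo : Filter.Tendsto (fun k : ℕ => q ^ k * vecL1 (r 0)) Filter.atTop (nhds 0) := by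
      have := tendsto_pow_atTop_nhds_zero_of_lt_one hqnn hq1
      simpa using this.mul_const (vecL1 (r 0))
    exact squeeze_zero (fun k => vecL1_nonneg _) hbound hgeo
  rw [show (0 : Fin m → ℝ) = fun _ => (0 : ℝ) from rfl]
  rw [tendsto_pi_nhds]
  intro i
  apply squeeze_zero_norm (fun k => ?_) hL1tendsto
  calc ‖r k i‖ = |r k i| := rfl
    _ ≤ ∑ j, |r k j| := Finset.single_le_sum (f := fun j => |r k j|) (fun j _ => abs_nonneg _) (Finset.mem_univ i)
    _ = vecL1 (r k) := rfl
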